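/- Let α : (A⁺, A^ω) → (S_+, S_ω) be a morphism into a finite ω-semigroup and let k = 2^{3|S_+|}. Then for every infinite word w ∈ A^ω and every position y ≥ k−1 of w, there exists a position x with y−(k−1) ≤ x ≤ y such that the k-type of x (the infix w[x−k, x−1], or the prefix w[0,x−1] if x < k) has a nonempty suffix v with α(v) idempotent. Consequently w contains infinitely many such distinguished positions. -/

import Mathlib

def spow {Sp : Type*} [Semigroup Sp] (x : Sp) : ℕ → Sp
  | 0 => x
  | n+1 => spow x n * x

lemma spow_succ {Sp : Type*} [Semigroup Sp] (x : Sp) (n : ℕ) :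
    spow x (n + 1) = spow x n * x := rfl

lemma spow_add {Sp : Type*} [Semigroup Sp] (x : Sp) (a b : ℕ) :
    spow x (a + b + 1) = spow x a * spow x b := by
  induction b with
  | zero => rfl
  | succ b ih =>
      have : a + (b + 1) + 1 = (a + b + 1) + 1 := by ring
      rw [this, spow_succ, ih, spow_succ, mul_assoc]

lemma spow_exists_idem {Sp : Type*} [Semigroup Sp] [Finite Sp] (x : Sp) :
    ∃ m : ℕ, spow x m * spow x m = spow x m := by
  obtain ⟨i, j, hne, heq⟩ := Finite.exists_ne_map_eq_of_infinite (spow x)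
  wlog hij : i < j generalizing i j
  · exact this j i hne.symm heq.symm (by omega)
  set d := j - i with hd
  have hd1 : 1 ≤ d := by omega
  have shift : ∀ s, spow x (j + s) = spow x (i + s) := by
    intro s
    induction s with
    | zero => simpa using heq.symm
    | succ s ih => rw [show j + (s+1) = (j+s)+1 by ring, spow_succ, ih, show i + (s+1) = (i+s)+1 by ring, spow_succ]
  have step : ∀ m, i ≤ m → spow x (m + d) = spow x m := by
    intro m hm
    have := shift (m - i)
    rw [show j + (m - i) = m + d by omega, show i + (m - i) = m by omega] at this
    exact this
  have per : ∀ c m, i ≤ m → spow x (m + c * d) = spow x m := by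
    intro c
    induction c with
    | zero => simp
    | succ c ih =>
        intro m hm
        rw [show m + (c+1)*d = (m + c*d) + d by ring, step _ (by omega), ih m hm]
  refine ⟨(i+1) * d - 1, ?_⟩
  have h1 : 1 ≤ (i+1)*d := by nlinarith
  rw [← spow_add]
  have : ((i+1)*d - 1) + ((i+1)*d - 1) + 1 = ((i+1)*d - 1) + (i+1)*d := by omega
  rw [this, per (i+1) _ (by nlinarith)]

section
variable {A Sp : Type*} [Semigroup Sp] [Fintype Sp]

lemma exists_idem_infix (α : List A → Sp)
    (hα : ∀ u v : List A, u ≠ [] → v ≠ [] → α (u ++ v) = α u * α v)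
    (u : List A) (hu : 2 ^ Fintype.card Sp ≤ u.length) :
    ∃ t : List A, t ≠ [] ∧ t <:+: u ∧ α t * α t = α t := by
  classical
  set m := u.length with hm
  -- segment from j (inclusive) to i (exclusive)
  set seg : ℕ → ℕ → List A := fun j i => (u.drop j).take (i - j) with hseg
  have seglen : ∀ j i, j ≤ i → i ≤ m → (seg j i).length = i - j := by
    intro j i h1 h2
    simp only [hseg, List.length_take, List.length_drop]
    omega
  have segne : ∀ j i, j < i → i ≤ m → seg j i ≠ [] := by
    intro j i h1 h2
    have := seglen j i (by omega) h2
    intro h; rw [h] at this; simp at this; omega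
  have segcat : ∀ j i i', j ≤ i → i ≤ i' → seg j i ++ seg i i' = seg j i' := by
    intro j i i' h1 h2
    simp only [hseg]
    rw [show i' - j = (i - j) + (i' - i) by omega, List.take_add]
    congr 2
    rw [List.drop_drop]
    congr 1
    omega
  have segmul : ∀ j i i', j < i → i < i' → i' ≤ m →
      α (seg j i') = α (seg j i) * α (seg i i') := by
    intro j i i' h1 h2 h3
    rw [← segcat j i i' (by omega) (by omega),
      hα _ _ (segne j i h1 (by omega)) (segne i i' h2 h3)]
  set P : ℕ → Finset Sp := fun i => (Finset.range i).image (fun j => α (seg j i)) with hP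
  -- pigeonhole on P over Icc 1 m
  have hcard : ((Finset.univ : Finset Sp).powerset.erase ∅).card < (Finset.Icc 1 m).card := by
    rw [Finset.card_erase_of_mem (by simp), Finset.card_powerset]
    simp only [Finset.card_univ, Nat.card_Icc]
    have : 0 < 2 ^ Fintype.card Sp := Nat.pow_pos (by norm_num)
    omega
  have hmaps : ∀ i ∈ Finset.Icc 1 m, P i ∈ (Finset.univ : Finset Sp).powerset.erase ∅ := by
    intro i hi
    simp only [Finset.mem_Icc] at hi
    refine Finset.mem_erase.2 ⟨?_, by simp⟩
    have : α (seg 0 i) ∈ P i := Finset.mem_image.2 ⟨0, by simp; omega, rfl⟩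
    intro h; rw [h] at this; simp at this
  obtain ⟨i, hi, i', hi', hne, heq⟩ :=
    Finset.exists_ne_map_eq_of_card_lt_of_maps_to hcard hmaps
  wlog hii : i < i' generalizing i i'
  · exact this i' hi' i hi hne.symm heq.symm (by omega)
  simp only [Finset.mem_Icc] at hi hi'
  set x := α (seg i i') with hx
  have key : ∀ r : ℕ, ∃ j < i, α (seg j i) = spow x r := by
    intro r
    induction r with
    | zero =>
        have : x ∈ P i' := Finset.mem_image.2 ⟨i, by simp [hii], rfl⟩
        rw [← heq] at this
        obtain ⟨j, hj, hje⟩ := Finset.mem_image.1 this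
        exact ⟨j, by simpa using hj, hje⟩
    | succ r ih =>
        obtain ⟨j, hj, hje⟩ := ih
        have : α (seg j i') = spow x (r + 1) := by
          rw [segmul j i i' hj hii hi'.2, hje, spow_succ]
        have hmem : spow x (r+1) ∈ P i' := Finset.mem_image.2 ⟨j, by simp; omega, this⟩
        rw [← heq] at hmem
        obtain ⟨j', hj', hje'⟩ := Finset.mem_image.1 hmem
        exact ⟨j', by simpa using hj', hje'⟩
  obtain ⟨r, hr⟩ := spow_exists_idem x
  obtain ⟨j, hj, hje⟩ := key r
  refine ⟨seg j i, segne j i hj (by omega), ?_, by rw [hje]; exact hr⟩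
  exact (List.take_prefix _ _).isInfix.trans (List.drop_suffix _ _).isInfix

end
/-- The `k`-type of position `x` in the infinite word `w : ℕ → A`: the word of length
`min x k` immediately preceding `x`, i.e. the prefix `w[0,x-1]` if `x < k` and the
infix `w[x-k,x-1]` otherwise. -/
def ktypeInf {A : Type*} (k : ℕ) (w : ℕ → A) (x : ℕ) : List A :=
  if x < k then List.ofFn fun i : Fin x => w i
  else List.ofFn fun i : Fin k => w (x - k + i)
lemma suffix_ktypeInf {A : Type*} (k : ℕ) (w : ℕ → A) (x : ℕ) (t : List A)
    (hx : t.length ≤ x) (hk : t.length ≤ k)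
    (hget : ∀ i : Fin t.length, t.get i = w (x - t.length + i)) :
    t <:+ ktypeInf k w x := by
  set L := t.length with hL
  unfold ktypeInf
  split_ifs with h
  · have : (List.ofFn fun i : Fin x => w i).drop (x - L) = t := by
      apply List.ext_get
      · simp; omega
      · intro n h1 h2
        simp only [List.get_eq_getElem, List.getElem_drop, List.getElem_ofFn]
        have := hget ⟨n, h2⟩
        simp only [List.get_eq_getElem] at this
        rw [this]
    rw [← this]
    exact List.drop_suffix _ _
  · have : (List.ofFn fun i : Fin k => w (x - k + i)).drop (k - L) = t := by
      apply List.ext_get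
      · simp; omega
      · intro n h1 h2
        simp only [List.get_eq_getElem, List.getElem_drop, List.getElem_ofFn]
        have := hget ⟨n, h2⟩
        simp only [List.get_eq_getElem] at this
        rw [this]
        congr 1
        omega
    rw [← this]
    exact List.drop_suffix _ _


/-- Let `α` be (the finite-word part of) a morphism into a finite ω-semigroup, with
finite semigroup part `Sp`, and let `k = 2^(3|Sp|)`. Assuming the consequence of
Simon's factorization forest theorem (every word of length ≥ k has a nonempty infix
whose image is idempotent), every position `y ≥ k-1` of an infinite word `w` admits a
distinguished position `x` with `y-(k-1) ≤ x ≤ y` — i.e. the `k`-type of `x` has a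
nonempty suffix `v` with `α v` idempotent — and consequently `w` contains infinitely
many distinguished positions. -/
theorem distinguished_exists_infinite {A Sp : Type*} [Semigroup Sp] [Fintype Sp]
    (α : List A → Sp)
    (hα : ∀ u v : List A, u ≠ [] → v ≠ [] → α (u ++ v) = α u * α v)
    (k : ℕ) (hk : k = 2 ^ (3 * Fintype.card Sp))
    (hSimon : ∀ v : List A, k ≤ v.length →
      ∃ t : List A, t ≠ [] ∧ t <:+: v ∧ α t * α t = α t)
    (w : ℕ → A) :
    (∀ y : ℕ, k - 1 ≤ y →
      ∃ x : ℕ, y - (k - 1) ≤ x ∧ x ≤ y ∧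
        ∃ v : List A, v ≠ [] ∧ v <:+ ktypeInf k w x ∧ α v * α v = α v) ∧
    (∀ N : ℕ, ∃ x : ℕ, N ≤ x ∧
      ∃ v : List A, v ≠ [] ∧ v <:+ ktypeInf k w x ∧ α v * α v = α v) := by
  have hSp : Nonempty Sp := ⟨α []⟩
  set n := Fintype.card Sp with hn
  have hn1 : 1 ≤ n := Fintype.card_pos
  set c := 2 ^ n with hc
  have hc1 : 1 ≤ c := Nat.one_le_two_pow
  have hck : c + 1 ≤ k := by
    rw [hk]
    calc c + 1 ≤ 2 ^ n + 2 ^ n := by omega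
    _ = 2 ^ (n + 1) := by ring
    _ ≤ 2 ^ (3 * n) := Nat.pow_le_pow_right (by norm_num) (by omega)
  have main : ∀ y : ℕ, k - 1 ≤ y →
      ∃ x : ℕ, y - (k - 1) ≤ x ∧ x ≤ y ∧
        ∃ v : List A, v ≠ [] ∧ v <:+ ktypeInf k w x ∧ α v * α v = α v := by
    intro y hy
    have hcy : c ≤ y := by omega
    set u : List A := List.ofFn (fun i : Fin c => w (y - c + i)) with hu
    have hul : u.length = c := by simp [hu]
    obtain ⟨t, htne, ⟨p, q, hpq⟩, hidem⟩ := exists_idem_infix α hα u (by rw [hul])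
    have hlen : p.length + t.length + q.length = c := by
      have := congrArg List.length hpq
      simp only [List.length_append, hul] at this
      omega
    have htl : 1 ≤ t.length := List.length_pos_iff.2 htne
    refine ⟨y - q.length, ?_, Nat.sub_le _ _, t, htne, ?_, hidem⟩
    · exact Nat.sub_le_sub_left (by omega) y
    · apply suffix_ktypeInf
      · omega
      · omega
      · intro i
        have hidx : p.length + (i : ℕ) < u.length := by rw [hul]; omega
        have h3 : u[p.length + (i : ℕ)]'hidx = t[(i : ℕ)]'i.isLt := by
          rw [List.getElem_of_eq hpq.symm hidx]
          rw [List.getElem_append_left (by simp only [List.length_append]; omega)]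
          rw [List.getElem_append_right (by omega)]
          congr 1
          omega
        have h2 : u[p.length + (i : ℕ)]'hidx = w (y - c + (p.length + i)) := by
          simp [hu]
        simp only [List.get_eq_getElem]
        rw [← h3, h2]
        congr 1
        omega
  refine ⟨main, fun N => ?_⟩
  obtain ⟨x, h1, _, hv⟩ := main (N + (k - 1)) (by omega)
  exact ⟨x, by omega, hv⟩
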